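/- Let β be the Bell-diagonal density matrix on ℂ²⊗ℂ² given by β = (1/3)(Ψ⁺(Ψ⁺)† + Ψ⁻(Ψ⁻)† + Φ⁺(Φ⁺)†), where Ψ^± = (e₀⊗e₀ ± e₁⊗e₁)/√2 and Φ⁺ = (e₀⊗e₁ + e₁⊗e₀)/√2 in the standard basis (e₀,e₁) of ℂ², and let β_swap denote the matrix with entries (β_swap)_{(j,i),(j',i')} = β_{(i,j),(i',j')}. Then N_H^b(β_swap⊗β) ≥ 5/12. -/

import Mathlib

open scoped Matrix Kronecker BigOperators ComplexOrder
open Matrix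

/-- The positive-semidefinite square root of a PSD matrix (0 if not PSD). -/
noncomputable def psdSqrt {N : Type*} [Fintype N] [DecidableEq N] (A : Matrix N N ℂ) :
    Matrix N N ℂ :=
  open scoped Classical in
  if h : A.PosSemidef then
    (h.1.eigenvectorUnitary : Matrix N N ℂ) *
      Matrix.diagonal ((↑) ∘ (Real.sqrt ·) ∘ h.1.eigenvalues) *
      (star h.1.eigenvectorUnitary : Matrix N N ℂ) else 0

/-- Squared Frobenius (Hilbert–Schmidt) norm: `‖X‖² = tr (Xᴴ X)`. -/
noncomputable def hsNormSq {N : Type*} [Fintype N] (X : Matrix N N ℂ) : ℝ :=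
  (Matrix.trace (Xᴴ * X)).re

/-- A density matrix: positive semidefinite with unit trace. -/
def IsDensity {N : Type*} [Fintype N] [DecidableEq N] (ρ : Matrix N N ℂ) : Prop :=
  ρ.PosSemidef ∧ ρ.trace = 1

/-- Standard inner product on `ℂ^N`. -/
noncomputable def cInner {N : Type*} [Fintype N] (x y : N → ℂ) : ℂ :=
  ∑ i, star (x i) * y i

/-- Outer product `ψ ψ†`. -/
noncomputable def outer {N : Type*} (ψ : N → ℂ) : Matrix N N ℂ :=
  Matrix.vecMulVec ψ (star ψ)

/-- The family of unit vectors of a rank-one von Neumann measurement: an orthonormal basis,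
indexed by the dimension. -/
def IsVNM {N : Type*} [Fintype N] [DecidableEq N] (u : N → N → ℂ) : Prop :=
  ∀ a b, cInner (u a) (u b) = if a = b then (1 : ℂ) else 0

/-- The rank-one projection `Π_h = u_h u_h†` of a measurement. -/
noncomputable def projOf {N : Type*} (u : N → N → ℂ) (h : N) : Matrix N N ℂ :=
  outer (u h)

/-- The measurement `{u_h u_h†}` fixes `σ`: `Σ_h Π_h σ Π_h = σ`. -/
def FixesVNM {N : Type*} [Fintype N] (u : N → N → ℂ) (σ : Matrix N N ℂ) : Prop :=
  ∑ h, projOf u h * σ * projOf u h = σ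

/-- Reduced state of the second factor: `(ρ_B)_{j j'} = Σ_i ρ_{(i,j),(i,j')}`. -/
noncomputable def redB {m n : ℕ} (ρ : Matrix (Fin m × Fin n) (Fin m × Fin n) ℂ) :
    Matrix (Fin n) (Fin n) ℂ :=
  Matrix.of fun j j' => ∑ i, ρ (i, j) (i, j')

/-- Reduced state of the first factor: `(ρ_C)_{k k'} = Σ_l ρ_{(k,l),(k',l)}`. -/
noncomputable def redC {u v : ℕ} (ρ : Matrix (Fin u × Fin v) (Fin u × Fin v) ℂ) :
    Matrix (Fin u) (Fin u) ℂ :=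
  Matrix.of fun k k' => ∑ l, ρ (k, l) (k', l)

/-- `I_m ⊗ P ⊗ I_v` acting on the middle two factors. -/
noncomputable def ampMid (m v : ℕ) {n u : ℕ} (P : Matrix (Fin n × Fin u) (Fin n × Fin u) ℂ) :
    Matrix ((Fin m × Fin n) × Fin u × Fin v) ((Fin m × Fin n) × Fin u × Fin v) ℂ :=
  Matrix.of fun p q =>
    (if p.1.1 = q.1.1 then (1 : ℂ) else 0) * P (p.1.2, p.2.1) (q.1.2, q.2.1) *
      (if p.2.2 = q.2.2 then (1 : ℂ) else 0)

/-- The map `Π^{BC}(X) = Σ_h (I_m ⊗ Π_h ⊗ I_v) X (I_m ⊗ Π_h ⊗ I_v)`. -/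
noncomputable def pinchBC {m n u v : ℕ} (w : (Fin n × Fin u) → (Fin n × Fin u) → ℂ)
    (X : Matrix ((Fin m × Fin n) × Fin u × Fin v) ((Fin m × Fin n) × Fin u × Fin v) ℂ) :
    Matrix ((Fin m × Fin n) × Fin u × Fin v) ((Fin m × Fin n) × Fin u × Fin v) ℂ :=
  ∑ h, ampMid m v (projOf w h) * X * ampMid m v (projOf w h)

/-- The measurement-induced nonbilocality `N_H^b(ρ_AB ⊗ ρ_CD)`. -/
noncomputable def NHb {m n u v : ℕ}
    (ρAB : Matrix (Fin m × Fin n) (Fin m × Fin n) ℂ)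
    (ρCD : Matrix (Fin u × Fin v) (Fin u × Fin v) ℂ) : ℝ :=
  sSup { r : ℝ | ∃ w : (Fin n × Fin u) → (Fin n × Fin u) → ℂ,
    IsVNM w ∧ FixesVNM w (redB ρAB ⊗ₖ redC ρCD) ∧
    r = hsNormSq (psdSqrt (ρAB ⊗ₖ ρCD) - pinchBC w (psdSqrt (ρAB ⊗ₖ ρCD))) }

/-- The Bell state `Ψ⁺ = (|00⟩ + |11⟩)/√2`. -/
noncomputable def PsiP : Fin 2 × Fin 2 → ℂ := fun p =>
  if p.1 = p.2 then (((1 : ℝ) / Real.sqrt 2 : ℝ) : ℂ) else 0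

/-- The Bell state `Ψ⁻ = (|00⟩ − |11⟩)/√2`. -/
noncomputable def PsiM : Fin 2 × Fin 2 → ℂ := fun p =>
  if p = (0, 0) then (((1 : ℝ) / Real.sqrt 2 : ℝ) : ℂ)
  else if p = (1, 1) then -(((1 : ℝ) / Real.sqrt 2 : ℝ) : ℂ) else 0

/-- The Bell state `Φ⁺ = (|01⟩ + |10⟩)/√2`. -/
noncomputable def PhiP : Fin 2 × Fin 2 → ℂ := fun p =>
  if p.1 = p.2 then 0 else (((1 : ℝ) / Real.sqrt 2 : ℝ) : ℂ)

/-- The Bell-diagonal state `β = (1/3)(Ψ⁺Ψ⁺† + Ψ⁻Ψ⁻† + Φ⁺Φ⁺†)`. -/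
noncomputable def bellDiag : Matrix (Fin 2 × Fin 2) (Fin 2 × Fin 2) ℂ :=
  ((1 / 3 : ℝ) : ℂ) • (outer PsiP + outer PsiM + outer PhiP)

/-- The swap of `bellDiag`. -/
noncomputable def bellSwap : Matrix (Fin 2 × Fin 2) (Fin 2 × Fin 2) ℂ :=
  Matrix.of fun p q => bellDiag (p.2, p.1) (q.2, q.1)

/-! ### Auxiliary integer scaffolding -/

private def iphiM : Fin 2 × Fin 2 → ℤ := fun p =>
  if p = (0,1) then 1 else if p = (1,0) then -1 else 0

private def zQ : Matrix (Fin 2 × Fin 2) (Fin 2 × Fin 2) ℤ := 2 - vecMulVec iphiM iphiM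

private def zT :
    Matrix ((Fin 2 × Fin 2) × Fin 2 × Fin 2) ((Fin 2 × Fin 2) × Fin 2 × Fin 2) ℤ := zQ ⊗ₖ zQ

private def bvz : Fin 2 × Fin 2 → (Fin 2 × Fin 2 → ℤ)
  | (0,0) => fun p => if p = (0,0) then 1 else if p = (1,1) then 1 else 0
  | (0,1) => fun p => if p = (0,0) then 1 else if p = (1,1) then -1 else 0
  | (1,0) => fun p => if p = (0,1) then 1 else if p = (1,0) then 1 else 0
  | (1,1) => fun p => if p = (0,1) then 1 else if p = (1,0) then -1 else 0

private def zP (h : Fin 2 × Fin 2) : Matrix (Fin 2 × Fin 2) (Fin 2 × Fin 2) ℤ :=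
  vecMulVec (bvz h) (bvz h)

private def zAmp (P : Matrix (Fin 2 × Fin 2) (Fin 2 × Fin 2) ℤ) :
    Matrix ((Fin 2 × Fin 2) × Fin 2 × Fin 2) ((Fin 2 × Fin 2) × Fin 2 × Fin 2) ℤ :=
  Matrix.of fun p q =>
    (if p.1.1 = q.1.1 then (1 : ℤ) else 0) * P (p.1.2, p.2.1) (q.1.2, q.2.1) *
      (if p.2.2 = q.2.2 then (1 : ℤ) else 0)

private def zD :
    Matrix ((Fin 2 × Fin 2) × Fin 2 × Fin 2) ((Fin 2 × Fin 2) × Fin 2 × Fin 2) ℤ :=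
  (4 : ℤ) • zT - ∑ h, zAmp (zP h) * zT * zAmp (zP h)

/-! ### Complexification -/

private noncomputable def mc {α β : Type*} (A : Matrix α β ℤ) : Matrix α β ℂ :=
  A.map (Int.cast : ℤ → ℂ)

private lemma mc_mul {α : Type*} [Fintype α] (A B : Matrix α α ℤ) :
    mc (A * B) = mc A * mc B := by
  simpa [mc] using Matrix.map_mul (L := A) (M := B) (f := Int.castRingHom ℂ)

private lemma mc_one {α : Type*} [Fintype α] [DecidableEq α] : mc (1 : Matrix α α ℤ) = 1 := by
  ext i j
  simp [mc, Matrix.one_apply, apply_ite (Int.cast : ℤ → ℂ)]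

private lemma mc_smul {α β : Type*} (n : ℤ) (A : Matrix α β ℤ) :
    mc (n • A) = (n : ℂ) • mc A := by
  ext i j; simp [mc]

private lemma mc_sum {α β ι : Type*} (s : Finset ι) (A : ι → Matrix α β ℤ) :
    mc (∑ i ∈ s, A i) = ∑ i ∈ s, mc (A i) := by
  ext i j; simp [mc, Matrix.sum_apply]

private lemma mc_add {α β : Type*} (A B : Matrix α β ℤ) : mc (A + B) = mc A + mc B := by
  ext i j; simp [mc]

private lemma mc_sub {α β : Type*} (A B : Matrix α β ℤ) : mc (A - B) = mc A - mc B := by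
  ext i j; simp [mc]

private lemma mc_kron {α β γ δ : Type*} (A : Matrix α β ℤ) (B : Matrix γ δ ℤ) :
    mc (A ⊗ₖ B) = mc A ⊗ₖ mc B := by
  ext ⟨a,b⟩ ⟨c,d⟩
  simp [mc, Matrix.kroneckerMap_apply]

private lemma mc_conjTranspose {α β : Type*} (A : Matrix α β ℤ) : (mc A)ᴴ = mc Aᵀ := by
  ext i j; simp [mc, Matrix.conjTranspose_apply]

private lemma mc_trace {α : Type*} [Fintype α] (A : Matrix α α ℤ) :
    (mc A).trace = ((A.trace : ℤ) : ℂ) := by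
  simp [mc, Matrix.trace, Matrix.diag]

/-! ### Integer facts, by `decide` -/

set_option maxRecDepth 100000 in
private lemma zfact1 : Matrix.trace (zDᵀ * zD) = 960 := by decide

set_option maxRecDepth 100000 in
private lemma zfact2 : zT * zT = (4 : ℤ) • zT := by decide

set_option maxRecDepth 100000 in
private lemma zfact3 : zTᵀ = zT := by decide

set_option maxRecDepth 100000 in
private lemma zfact4 : (∑ h, zP h * zP h) = (4 : ℤ) • 1 := by decide

set_option maxRecDepth 100000 in
private lemma zfact5 : ∀ a b, (∑ p, bvz a p * bvz b p) = if a = b then 2 else 0 := by decide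

set_option maxRecDepth 100000 in
private lemma zfact6 : zP (0,0) + zP (0,1) + zP (1,0) = zQ := by decide

set_option maxRecDepth 100000 in
private lemma zfact7 : ∀ p q : Fin 2 × Fin 2, zQ (p.2, p.1) (q.2, q.1) = zQ p q := by
  intro p q; fin_cases p <;> fin_cases q <;> decide

set_option maxRecDepth 100000 in
private lemma zfact8 : ∀ j j' : Fin 2, (∑ i, zQ (i,j) (i,j')) = if j = j' then 3 else 0 := by
  decide

set_option maxRecDepth 100000 in
private lemma zfact9 : ∀ k k' : Fin 2, (∑ l, zQ (k,l) (k',l)) = if k = k' then 3 else 0 := by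
  decide

/-! ### Bell vectors as multiples of integer vectors -/

private noncomputable def cc : ℂ := (((1 : ℝ) / Real.sqrt 2 : ℝ) : ℂ)

private lemma hcc : cc * cc = 2⁻¹ := by
  rw [cc, ← Complex.ofReal_mul, one_div, ← mul_inv, Real.mul_self_sqrt (by norm_num : (0:ℝ) ≤ 2)]
  norm_num

private lemma star_cc : star cc = cc := by
  simp [cc, Complex.star_def, Complex.conj_ofReal]

private noncomputable def bw : Fin 2 × Fin 2 → (Fin 2 × Fin 2 → ℂ) := fun h p =>
  cc * ((bvz h p : ℤ) : ℂ)

private lemma hPsiP : PsiP = bw (0,0) := by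
  funext p; fin_cases p <;> norm_num [PsiP, bw, bvz, cc, Prod.ext_iff]

private lemma hPsiM : PsiM = bw (0,1) := by
  funext p; fin_cases p <;> norm_num [PsiM, bw, bvz, cc, Prod.ext_iff]

private lemma hPhiP : PhiP = bw (1,0) := by
  funext p; fin_cases p <;> norm_num [PhiP, bw, bvz, cc, Prod.ext_iff]

private lemma houter (h : Fin 2 × Fin 2) : outer (bw h) = (2:ℂ)⁻¹ • mc (zP h) := by
  ext i j
  simp only [outer, Matrix.vecMulVec_apply, Pi.star_apply, bw, zP, mc, Matrix.map_apply,
    Matrix.smul_apply, star_mul', star_cc, star_intCast, smul_eq_mul]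
  rw [show cc * (bvz h i : ℂ) * (cc * (bvz h j : ℂ))
      = (cc * cc) * ((bvz h i : ℂ) * (bvz h j : ℂ)) by ring, hcc]
  push_cast
  ring

private lemma hbell : bellDiag = (6:ℂ)⁻¹ • mc zQ := by
  rw [bellDiag, hPsiP, hPsiM, hPhiP, houter, houter, houter, ← smul_add, ← smul_add,
    ← mc_add, ← mc_add, zfact6, smul_smul]
  norm_num

private lemma hswap : bellSwap = (6:ℂ)⁻¹ • mc zQ := by
  ext p q
  show bellDiag (p.2, p.1) (q.2, q.1) = _
  rw [hbell]
  simp only [Matrix.smul_apply, mc, Matrix.map_apply, smul_eq_mul]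
  rw [zfact7 p q]

/-! ### The square root of the product state -/

private noncomputable def Tm :
    Matrix ((Fin 2 × Fin 2) × Fin 2 × Fin 2) ((Fin 2 × Fin 2) × Fin 2 × Fin 2) ℂ :=
  (12:ℂ)⁻¹ • mc zT

private lemma hταs : bellSwap ⊗ₖ bellDiag = (36:ℂ)⁻¹ • mc zT := by
  rw [hswap, hbell, Matrix.smul_kronecker, Matrix.kronecker_smul, smul_smul, zT, mc_kron]
  norm_num

private lemma hTsq : Tm * Tm = bellSwap ⊗ₖ bellDiag := by
  rw [hταs, Tm, smul_mul_assoc, mul_smul_comm, ← mc_mul, zfact2, mc_smul, smul_smul, smul_smul]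
  norm_num

private lemma hTH : Tmᴴ = Tm := by
  rw [Tm, Matrix.conjTranspose_smul, mc_conjTranspose, zfact3]
  norm_num

private lemma hτpsd : (bellSwap ⊗ₖ bellDiag).PosSemidef := by
  rw [← hTsq]
  have h := Matrix.posSemidef_conjTranspose_mul_self Tm
  rwa [hTH] at h

private lemma hTpsd : Tm.PosSemidef := by
  have key : Tm = ((((Real.sqrt 48)⁻¹ : ℝ) : ℂ) • mc zT)ᴴ * ((((Real.sqrt 48)⁻¹ : ℝ) : ℂ) • mc zT) := by
    rw [Matrix.conjTranspose_smul, mc_conjTranspose, zfact3, smul_mul_assoc, mul_smul_comm,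
      ← mc_mul, zfact2, mc_smul, smul_smul, smul_smul, Tm]
    congr 1
    rw [Complex.star_def, Complex.conj_ofReal, ← Complex.ofReal_mul,
      show (Real.sqrt 48)⁻¹ * (Real.sqrt 48)⁻¹ = ((Real.sqrt 48) * (Real.sqrt 48))⁻¹ by
        rw [mul_inv],
      Real.mul_self_sqrt (by norm_num)]
    norm_num
  rw [key]
  exact Matrix.posSemidef_conjTranspose_mul_self _

open scoped MatrixOrder in
private lemma hsqrt : psdSqrt (bellSwap ⊗ₖ bellDiag) = Tm := by
  rw [psdSqrt, dif_pos hτpsd]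
  have e := hτpsd.1.cfc_eq Real.sqrt
  rw [Matrix.IsHermitian.cfc, Unitary.conjStarAlgAut_apply] at e
  refine e.symm.trans ?_
  rw [← cfcₙ_eq_cfc (hf0 := Real.sqrt_zero), ← CFC.sqrt_eq_real_sqrt _ hτpsd.nonneg]
  exact CFC.sqrt_unique hTsq hTpsd.nonneg

/-! ### The Bell measurement -/

private lemma hVNM : IsVNM bw := by
  intro a b
  have step : cInner (bw a) (bw b) = (cc * cc) * ((∑ p, bvz a p * bvz b p : ℤ) : ℂ) := by
    rw [cInner]
    push_cast
    rw [Finset.mul_sum]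
    refine Finset.sum_congr rfl fun p _ => ?_
    simp only [bw, star_mul', star_cc, star_intCast]
    push_cast
    ring
  rw [step, hcc, zfact5 a b]
  split_ifs <;> norm_num

private lemma hproj (h : Fin 2 × Fin 2) : projOf bw h = (2:ℂ)⁻¹ • mc (zP h) := by
  rw [projOf, houter]

private lemma hredB : redB bellSwap = (2:ℂ)⁻¹ • 1 := by
  ext j j'
  show ∑ i, bellSwap (i, j) (i, j') = _
  rw [hswap]
  simp only [Matrix.smul_apply, mc, Matrix.map_apply, smul_eq_mul]
  rw [← Finset.mul_sum,
    show (∑ i, ((zQ (i,j) (i,j') : ℤ) : ℂ)) = ((∑ i, zQ (i,j) (i,j') : ℤ) : ℂ) by push_cast; ring,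
    zfact8 j j']
  by_cases hj : j = j' <;> simp [hj, Matrix.one_apply] <;> norm_num

private lemma hredC : redC bellDiag = (2:ℂ)⁻¹ • 1 := by
  ext k k'
  show ∑ l, bellDiag (k, l) (k', l) = _
  rw [hbell]
  simp only [Matrix.smul_apply, mc, Matrix.map_apply, smul_eq_mul]
  rw [← Finset.mul_sum,
    show (∑ l, ((zQ (k,l) (k',l) : ℤ) : ℂ)) = ((∑ l, zQ (k,l) (k',l) : ℤ) : ℂ) by push_cast; ring,
    zfact9 k k']
  by_cases hk : k = k' <;> simp [hk, Matrix.one_apply] <;> norm_num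

private lemma hσ : redB bellSwap ⊗ₖ redC bellDiag = (4:ℂ)⁻¹ • 1 := by
  rw [hredB, hredC, Matrix.smul_kronecker, Matrix.kronecker_smul, smul_smul,
    Matrix.one_kronecker_one]
  norm_num

private lemma hfix : FixesVNM bw (redB bellSwap ⊗ₖ redC bellDiag) := by
  rw [FixesVNM, hσ]
  have hterm : ∀ h : Fin 2 × Fin 2,
      projOf bw h * ((4:ℂ)⁻¹ • 1) * projOf bw h = (16:ℂ)⁻¹ • mc (zP h * zP h) := by
    intro h
    rw [hproj, mc_mul]
    simp only [smul_mul_assoc, mul_smul_comm, Matrix.mul_one, smul_smul]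
    norm_num
  simp_rw [hterm]
  rw [← Finset.smul_sum, ← mc_sum, zfact4, mc_smul, mc_one, smul_smul]
  norm_num

/-! ### The pinching computation -/

private lemma hamp (h : Fin 2 × Fin 2) :
    ampMid 2 2 (projOf bw h) = (2:ℂ)⁻¹ • mc (zAmp (zP h)) := by
  rw [hproj]
  ext p q
  simp only [ampMid, zAmp, mc, Matrix.of_apply, Matrix.map_apply, Matrix.smul_apply,
    smul_eq_mul]
  push_cast [apply_ite (Int.cast : ℤ → ℂ)]
  ring

private lemma hpinch :
    pinchBC bw Tm = (48:ℂ)⁻¹ • mc (∑ h, zAmp (zP h) * zT * zAmp (zP h)) := by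
  rw [pinchBC]
  have hterm : ∀ h : Fin 2 × Fin 2,
      ampMid 2 2 (projOf bw h) * Tm * ampMid 2 2 (projOf bw h)
        = (48:ℂ)⁻¹ • mc (zAmp (zP h) * zT * zAmp (zP h)) := by
    intro h
    rw [hamp, Tm, mc_mul, mc_mul]
    simp only [smul_mul_assoc, mul_smul_comm, smul_smul]
    norm_num
  simp_rw [hterm]
  rw [← Finset.smul_sum, ← mc_sum]

private lemma hdiff : Tm - pinchBC bw Tm = (48:ℂ)⁻¹ • mc zD := by
  rw [hpinch, Tm, zD, mc_sub, mc_smul, smul_sub, smul_smul]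
  norm_num

private lemma hvalue : hsNormSq (Tm - pinchBC bw Tm) = 5 / 12 := by
  rw [hdiff, hsNormSq]
  rw [Matrix.conjTranspose_smul, mc_conjTranspose, smul_mul_assoc, mul_smul_comm, ← mc_mul,
    Matrix.trace_smul, Matrix.trace_smul, mc_trace, zfact1]
  rw [show (star (48:ℂ)⁻¹ : ℂ) = (48:ℂ)⁻¹ by norm_num]
  rw [smul_eq_mul, smul_eq_mul,
    show ((48:ℂ)⁻¹ * ((48:ℂ)⁻¹ * ((960:ℤ):ℂ))) = (((5/12 : ℝ)) : ℂ) by push_cast; norm_num]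
  exact Complex.ofReal_re _

/-! ### Generic boundedness of the pinching -/

section Bound

variable {m n u v : ℕ}

private lemma proj_mul {N : Type*} [Fintype N] [DecidableEq N] {w : N → N → ℂ}
    (hw : IsVNM w) (a b : N) :
    projOf w a * projOf w b = if a = b then projOf w a else 0 := by
  ext i j
  simp only [projOf, outer, Matrix.mul_apply, Matrix.vecMulVec_apply, Pi.star_apply]
  have hsum : (∑ k, w a i * star (w a k) * (w b k * star (w b j)))
      = (w a i * star (w b j)) * ∑ k, star (w a k) * w b k := by
    rw [Finset.mul_sum]
    exact Finset.sum_congr rfl fun k _ => by ring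
  rw [hsum, show (∑ k, star (w a k) * w b k) = cInner (w a) (w b) from rfl, hw a b]
  split_ifs with hab
  · subst hab; simp [Matrix.vecMulVec_apply]
  · simp

private lemma proj_herm {N : Type*} [Fintype N] (w : N → N → ℂ) (h : N) :
    (projOf w h)ᴴ = projOf w h := by
  ext i j
  simp only [projOf, outer, Matrix.conjTranspose_apply, Matrix.vecMulVec_apply, Pi.star_apply,
    star_mul', star_star]
  ring

private lemma amp_mul (P P' : Matrix (Fin n × Fin u) (Fin n × Fin u) ℂ) :
    ampMid m v P * ampMid m v P' = ampMid m v (P * P') := by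
  ext ⟨⟨a,b⟩,c,d⟩ ⟨⟨a',b'⟩,c',d'⟩
  simp only [ampMid, Matrix.mul_apply, Matrix.of_apply, Fintype.sum_prod_type]
  simp only [mul_ite, ite_mul, one_mul, mul_one, zero_mul, mul_zero,
    Finset.sum_ite_irrel, Finset.sum_ite_eq, Finset.sum_ite_eq', Finset.mem_univ, if_true,
    Finset.sum_const_zero]

private lemma amp_herm (P : Matrix (Fin n × Fin u) (Fin n × Fin u) ℂ) :
    (ampMid m v P)ᴴ = ampMid m v Pᴴ := by
  ext ⟨⟨a,b⟩,c,d⟩ ⟨⟨a',b'⟩,c',d'⟩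
  simp only [ampMid, Matrix.conjTranspose_apply, Matrix.of_apply, star_mul', apply_ite star,
    star_one, star_zero, eq_comm]

private lemma amp_zero : ampMid m v (0 : Matrix (Fin n × Fin u) (Fin n × Fin u) ℂ) = 0 := by
  ext p q
  simp [ampMid]

private lemma hs_nonneg {N : Type*} [Fintype N] (M : Matrix N N ℂ) : 0 ≤ hsNormSq M := by
  rw [hsNormSq]
  have : (Matrix.trace (Mᴴ * M)).re = ∑ i, ∑ j, Complex.normSq (M j i) := by
    simp only [Matrix.trace, Matrix.diag, Matrix.mul_apply, Matrix.conjTranspose_apply]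
    rw [Complex.re_sum]
    refine Finset.sum_congr rfl fun i _ => ?_
    rw [Complex.re_sum]
    refine Finset.sum_congr rfl fun j _ => ?_
    rw [Complex.star_def, mul_comm, Complex.mul_conj, Complex.ofReal_re]
  rw [this]
  exact Finset.sum_nonneg fun i _ => Finset.sum_nonneg fun j _ => Complex.normSq_nonneg _

private lemma pinch_bound {w : (Fin n × Fin u) → (Fin n × Fin u) → ℂ} (hw : IsVNM w)
    (X : Matrix ((Fin m × Fin n) × Fin u × Fin v) ((Fin m × Fin n) × Fin u × Fin v) ℂ) :
    hsNormSq (X - pinchBC w X) ≤ hsNormSq X := by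
  set P : (Fin n × Fin u) → Matrix ((Fin m × Fin n) × Fin u × Fin v)
      ((Fin m × Fin n) × Fin u × Fin v) ℂ := fun h => ampMid m v (projOf w h) with hP
  have hPmul : ∀ a b, P a * P b = if a = b then P a else 0 := by
    intro a b
    rw [hP]
    simp only
    rw [amp_mul, proj_mul hw]
    split_ifs with hab
    · rfl
    · exact amp_zero
  have hPH : ∀ h, (P h)ᴴ = P h := fun h => by
    rw [hP]; simp only; rw [amp_herm, proj_herm]
  set Y := pinchBC w X with hY
  have hYdef : Y = ∑ h, P h * X * P h := rfl
  have hYH : Yᴴ = ∑ h, P h * Xᴴ * P h := by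
    rw [hYdef, Matrix.conjTranspose_sum]
    refine Finset.sum_congr rfl fun h _ => ?_
    rw [Matrix.conjTranspose_mul, Matrix.conjTranspose_mul, hPH, Matrix.mul_assoc]
  have key : Matrix.trace (Yᴴ * Y) = Matrix.trace (Xᴴ * Y) := by
    have e1 : Yᴴ * Y = ∑ a, ∑ b, (P a * Xᴴ * P a) * (P b * X * P b) := by
      rw [hYH, hYdef, Finset.sum_mul_sum]
    have e2 : Xᴴ * Y = ∑ a, Xᴴ * (P a * X * P a) := by
      rw [hYdef, Finset.mul_sum]
    rw [e1, e2, Matrix.trace_sum, Matrix.trace_sum]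
    refine Finset.sum_congr rfl fun a _ => ?_
    rw [Matrix.trace_sum, Finset.sum_eq_single a]
    · calc Matrix.trace ((P a * Xᴴ * P a) * (P a * X * P a))
          = Matrix.trace (P a * (Xᴴ * ((P a * P a) * (X * P a)))) := by
            simp only [Matrix.mul_assoc]
        _ = Matrix.trace (P a * (Xᴴ * (P a * (X * P a)))) := by
            rw [hPmul a a, if_pos rfl]
        _ = Matrix.trace ((Xᴴ * (P a * (X * P a))) * P a) := Matrix.trace_mul_comm _ _
        _ = Matrix.trace (Xᴴ * (P a * X * ((P a * P a)))) := by
            simp only [Matrix.mul_assoc]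
        _ = Matrix.trace (Xᴴ * (P a * X * P a)) := by rw [hPmul a a, if_pos rfl]
    · intro b _ hba
      have hz : (P a * Xᴴ * P a) * (P b * X * P b) = 0 := by
        have : (P a * Xᴴ * P a) * (P b * X * P b)
            = P a * Xᴴ * ((P a * P b) * (X * P b)) := by simp only [Matrix.mul_assoc]
        rw [this, hPmul a b, if_neg (fun hab => hba hab.symm)]
        simp
      rw [hz, Matrix.trace_zero]
    · simp
  have hXYstar : Matrix.trace (Yᴴ * X) = star (Matrix.trace (Xᴴ * Y)) := by
    rw [← Matrix.trace_conjTranspose, Matrix.conjTranspose_mul,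
      Matrix.conjTranspose_conjTranspose]
  have expand : (X - Y)ᴴ * (X - Y) = Xᴴ * X - Xᴴ * Y - Yᴴ * X + Yᴴ * Y := by
    rw [Matrix.conjTranspose_sub, Matrix.sub_mul, Matrix.mul_sub, Matrix.mul_sub]
    abel
  have heq : hsNormSq (X - Y) = hsNormSq X - hsNormSq Y := by
    rw [hsNormSq, hsNormSq, hsNormSq, expand, Matrix.trace_add, Matrix.trace_sub,
      Matrix.trace_sub, Complex.add_re, Complex.sub_re, Complex.sub_re]
    have h1 : (Matrix.trace (Yᴴ * X)).re = (Matrix.trace (Xᴴ * Y)).re := by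
      rw [hXYstar, Complex.star_def, Complex.conj_re]
    have h2 : (Matrix.trace (Xᴴ * Y)).re = (Matrix.trace (Yᴴ * Y)).re := by rw [← key]
    linarith
  rw [heq]
  linarith [hs_nonneg Y]

end Bound

/-- `N_H^b(β_swap ⊗ β) ≥ 5/12`. -/
theorem stmt19 : NHb bellSwap bellDiag ≥ 5 / 12 := by
  have hmem : (5/12 : ℝ) ∈ { r : ℝ | ∃ w : (Fin 2 × Fin 2) → (Fin 2 × Fin 2) → ℂ,
      IsVNM w ∧ FixesVNM w (redB bellSwap ⊗ₖ redC bellDiag) ∧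
      r = hsNormSq (psdSqrt (bellSwap ⊗ₖ bellDiag)
        - pinchBC w (psdSqrt (bellSwap ⊗ₖ bellDiag))) } := by
    exact ⟨bw, hVNM, hfix, by rw [hsqrt, hvalue]⟩
  have hbdd : BddAbove { r : ℝ | ∃ w : (Fin 2 × Fin 2) → (Fin 2 × Fin 2) → ℂ,
      IsVNM w ∧ FixesVNM w (redB bellSwap ⊗ₖ redC bellDiag) ∧
      r = hsNormSq (psdSqrt (bellSwap ⊗ₖ bellDiag)
        - pinchBC w (psdSqrt (bellSwap ⊗ₖ bellDiag))) } := by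
    refine ⟨hsNormSq (psdSqrt (bellSwap ⊗ₖ bellDiag)), ?_⟩
    rintro r ⟨w, hw, -, rfl⟩
    exact pinch_bound hw _
  exact le_csSup hbdd hmem
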